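/- Let Σ be a countable Markov shift with a symbol i and q ∈ ℕ such that there are infinitely many admissible words of length q+1 starting and ending at i in which i appears only at the endpoints, and let τ ∈ R. Then the periodic measures μ_k associated to these words satisfy ∫ τ dμ_k → ∞ along a subsequence of distinct words; hence the corresponding flow-invariant measures converge on cylinders to the zero measure. -/

import Mathlib

open MeasureTheory Filter Topology
open scoped NNReal ENNReal

/-- The underlying set of the countable Markov shift with transition matrix `B`. -/
def ShiftSet (B : ℕ → ℕ → Prop) : Set (ℕ → ℕ) := {x | ∀ n, B (x n) (x (n + 1))}

/-- The countable Markov shift determined by the transition matrix `B`,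
with the subspace topology of the product topology and the induced Borel structure. -/
abbrev Shift (B : ℕ → ℕ → Prop) : Type := ↥(ShiftSet B)

/-- The cylinder set determined by a finite word `w`. -/
def cyl (B : ℕ → ℕ → Prop) (w : List ℕ) : Set (Shift B) :=
  {x | ∀ j : Fin w.length, x.val j = w.get j}

/-- The shift map. -/
def shiftMap (B : ℕ → ℕ → Prop) : Shift B → Shift B :=
  fun x => ⟨fun n => x.val (n + 1), fun n => x.property (n + 1)⟩

/-- A measure is shift invariant if the measure of the preimage under the shift of
any Borel set coincides with the measure of the set. -/
def IsShiftInvariant (B : ℕ → ℕ → Prop) (μ : Measure (Shift B)) : Prop :=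
  ∀ s : Set (Shift B), MeasurableSet s → μ (shiftMap B ⁻¹' s) = μ s

/-- The class `R` of roof functions: uniformly continuous (in the shift metric), bounded
away from zero, with finite second variation, and tending to infinity as the first symbol
tends to infinity. -/
def ClassR (B : ℕ → ℕ → Prop) (τ : Shift B → ℝ) : Prop :=
  (∀ ε > (0 : ℝ), ∃ N : ℕ, ∀ x y : Shift B,
      (∀ j < N, x.val j = y.val j) → |τ x - τ y| < ε) ∧
  (∃ c > (0 : ℝ), ∀ x, c ≤ τ x) ∧
  (∃ V : ℝ, ∀ x y : Shift B, x.val 0 = y.val 0 → x.val 1 = y.val 1 → |τ x - τ y| ≤ V) ∧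
  (∀ M : ℝ, ∃ k : ℕ, ∀ x : Shift B, k ≤ x.val 0 → M ≤ τ x)

/-- The flow-invariant measure of the suspension flow with roof `τ` associated to a
shift-invariant probability measure `μ` with `∫ τ dμ < ∞`: the normalized restriction of
`μ × Leb` to the region below the graph of `τ`. -/
noncomputable def suspMeasure (B : ℕ → ℕ → Prop) (τ : Shift B → ℝ)
    (μ : Measure (Shift B)) [SFinite μ] : Measure (Shift B × ℝ) :=
  (ENNReal.ofReal (∫ x, τ x ∂μ))⁻¹ •
    ((μ.prod volume).restrict {p : Shift B × ℝ | 0 ≤ p.2 ∧ p.2 < τ p.1})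

/-- The periodic measure equidistributed on the orbit of a periodic point `p` of period `m`. -/
noncomputable def periodicMeasure (B : ℕ → ℕ → Prop) (p : Shift B) (m : ℕ) :
    Measure (Shift B) :=
  (m : ℝ≥0∞)⁻¹ • ∑ j ∈ Finset.range m, Measure.dirac ((shiftMap B)^[j] p)


instance periodicMeasure.sfinite (B : ℕ → ℕ → Prop) (p : Shift B) (m : ℕ) :
    SFinite (periodicMeasure B p m) := by
  have h : ∀ s : Finset ℕ, SFinite (∑ j ∈ s, Measure.dirac ((shiftMap B)^[j] p)) := by
    intro s
    induction s using Finset.induction_on with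
    | empty => simpa using inferInstanceAs (SFinite (0 : Measure (Shift B)))
    | insert _ _ hns ih =>
        rw [Finset.sum_insert hns]
        haveI := ih
        infer_instance
  haveI := h (Finset.range m)
  unfold periodicMeasure
  infer_instance

/-- Admissible words of length `q+1` starting and ending at `i` in which `i` appears only
at the endpoints. -/
def loopWords (B : ℕ → ℕ → Prop) (i q : ℕ) : Set (List ℕ) :=
  {w | w.length = q + 1 ∧ w.head? = some i ∧ w.getLast? = some i ∧
    (∀ j, 0 < j → j < q → w.getD j 0 ≠ i) ∧ w.Chain' B}

/-- if there are infinitely many admissible words of length `q+1` from `i`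
to `i` with `i` only at the endpoints, and `τ ∈ R`, then there is a sequence of distinct
associated periodic points whose periodic measures have `τ`-integrals tending to infinity;
hence the corresponding flow-invariant measures converge on cylinders to the zero measure. -/
lemma iter_shift (B : ℕ → ℕ → Prop) (m : ℕ) : ∀ (x : Shift B) (n : ℕ),
    ((shiftMap B)^[m] x).val n = x.val (n + m) := by
  induction m with
  | zero => intro x n; rfl
  | succ m ih =>
      intro x n
      rw [Function.iterate_succ_apply, ih]
      rfl

lemma wordPoint_exists (B : ℕ → ℕ → Prop) (i q : ℕ) (hq : 0 < q) (w : List ℕ)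
    (hw : w ∈ loopWords B i q) :
    ∃ p : Shift B, (∀ n, p.val n = w.getD (n % q) 0) ∧ (shiftMap B)^[q] p = p ∧
      List.ofFn (fun j : Fin (q + 1) => p.val j) = w := by
  obtain ⟨hlen, hhead, hlast, _, hch⟩ := hw
  have hne : w ≠ [] := by intro h; rw [h] at hlen; simp at hlen
  have h0 : w.getD 0 0 = i := by
    rw [List.head?_eq_head hne] at hhead
    rw [List.getD_eq_getElem w 0 (show 0 < w.length by omega), List.getElem_zero]
    exact Option.some_injective _ hhead
  have hqi : w.getD q 0 = i := by
    rw [List.getLast?_eq_getLast_of_ne_nil hne] at hlast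
    have hgl := Option.some_injective _ hlast
    rw [List.getLast_eq_getElem] at hgl
    simp only [hlen, Nat.add_sub_cancel] at hgl
    rw [List.getD_eq_getElem w 0 (show q < w.length by omega)]
    exact hgl
  have hchain : ∀ j, j + 1 < q + 1 → B (w.getD j 0) (w.getD (j + 1) 0) := by
    intro j hj
    have h := List.isChain_iff_getElem.mp hch j (by omega)
    rw [List.getD_eq_getElem w 0 (show j < w.length by omega),
        List.getD_eq_getElem w 0 (show j + 1 < w.length by omega)]
    exact h
  have adm : ∀ n, B (w.getD (n % q) 0) (w.getD ((n + 1) % q) 0) := by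
    intro n
    have hr : n % q < q := Nat.mod_lt _ hq
    have hmod : (n % q + 1) % q = (n + 1) % q := Nat.mod_add_mod n q 1
    rcases Nat.lt_or_ge (n % q + 1) q with hl | hge
    · rw [← hmod, Nat.mod_eq_of_lt hl]
      exact hchain _ (by omega)
    · have he : n % q + 1 = q := by omega
      have h1 : (n % q + 1) % q = 0 := by rw [he]; exact Nat.mod_self q
      rw [← hmod, h1, h0]
      have hb := hchain (n % q) (by omega)
      rw [he, hqi] at hb
      exact hb
  refine ⟨⟨fun n => w.getD (n % q) 0, adm⟩, fun n => rfl, ?_, ?_⟩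
  · apply Subtype.ext
    funext n
    rw [iter_shift]
    show w.getD ((n + q) % q) 0 = w.getD (n % q) 0
    rw [Nat.add_mod_right]
  · apply List.ext_getElem (by simp [hlen])
    intro j h1 h2
    rw [List.getElem_ofFn]
    show w.getD ((j : ℕ) % q) 0 = w[j]
    simp only [List.length_ofFn] at h1
    rcases Nat.lt_or_ge j q with hjq | hjq
    · rw [Nat.mod_eq_of_lt hjq, List.getD_eq_getElem w 0 (show j < w.length by omega)]
    · have hj : j = q := by omega
      have hm : j % q = 0 := by rw [hj]; exact Nat.mod_self q
      rw [hm, h0]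
      have hg : w[j] = w.getD j 0 := (List.getD_eq_getElem w 0 h2).symm
      rw [hg, hj, hqi]

lemma le_foldr_max {l : List ℕ} {x : ℕ} (h : x ∈ l) : x ≤ l.foldr max 0 := by
  induction l with
  | nil => cases h
  | cons a t ih =>
      rcases List.mem_cons.mp h with rfl | h'
      · exact le_max_left _ _
      · exact le_trans (ih h') (le_max_right _ _)

lemma letters_big (B : ℕ → ℕ → Prop) (i q : ℕ) (hq : 0 < q)
    (hW : (loopWords B i q).Infinite) :
    ∀ K : ℕ, ∃ w ∈ loopWords B i q, ∃ j, 0 < j ∧ j < q ∧ K ≤ w.getD j 0 := by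
  intro K
  by_contra hcon
  push_neg at hcon
  set K' := max K (i + 1) with hK'
  have hsubfin : (loopWords B i q).Finite := by
    have hfin : (Set.range (fun v : Fin (q + 1) → Fin K' =>
        List.ofFn (fun j => ((v j : ℕ))))).Finite := Set.finite_range _
    apply hfin.subset
    intro w hwmem
    obtain ⟨hlen, hhead, hlast, _, _⟩ := hwmem
    have hne : w ≠ [] := by intro h; rw [h] at hlen; simp at hlen
    have h0 : w[0]'(by omega) = i := by
      rw [List.head?_eq_head hne] at hhead
      rw [List.getElem_zero]; exact Option.some_injective _ hhead
    have hqi : w[q]'(by omega) = i := by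
      rw [List.getLast?_eq_getLast_of_ne_nil hne] at hlast
      have hgl := Option.some_injective _ hlast
      rw [List.getLast_eq_getElem] at hgl
      simp only [hlen, Nat.add_sub_cancel] at hgl
      exact hgl
    have hlt : ∀ j (h : j < w.length), w[j] < K' := by
      intro j h
      rcases Nat.eq_zero_or_pos j with rfl | hj0
      · rw [h0]; omega
      rcases Nat.lt_or_ge j q with hjq | hjq
      · have := hcon w ⟨hlen, hhead, hlast, ‹_›, ‹_›⟩ j hj0 hjq
        rw [List.getD_eq_getElem w 0 h] at this
        omega
      · have hj : j = q := by omega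
        subst hj; rw [hqi]; omega
    refine ⟨fun j => ⟨w[(j : ℕ)]'(by omega), hlt _ _⟩, ?_⟩
    apply List.ext_getElem (by simp [hlen])
    intro j h1 h2
    simp only [List.getElem_ofFn]
  exact hW hsubfin

lemma integral_periodicMeasure (B : ℕ → ℕ → Prop) (τ : Shift B → ℝ) (pp : Shift B) (m : ℕ) :
    ∫ x, τ x ∂(periodicMeasure B pp m) =
      (m : ℝ)⁻¹ * ∑ j ∈ Finset.range m, τ ((shiftMap B)^[j] pp) := by
  have hint : ∀ j ∈ Finset.range m, Integrable τ (Measure.dirac ((shiftMap B)^[j] pp)) :=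
    fun j _ => (integrable_congr (ae_eq_dirac τ)).2 (integrable_const _)
  simp only [periodicMeasure]
  rw [integral_smul_measure, integral_finset_sum_measure hint]
  simp [integral_dirac, ENNReal.toReal_inv, smul_eq_mul]

lemma periodicMeasure_univ (B : ℕ → ℕ → Prop) (pp : Shift B) (m : ℕ) (hm : 0 < m) :
    periodicMeasure B pp m Set.univ = 1 := by
  simp only [periodicMeasure, Measure.smul_apply, smul_eq_mul,
    Measure.finset_sum_apply, Measure.dirac_apply_of_mem (Set.mem_univ _)]
  rw [Finset.sum_const, Finset.card_range, nsmul_eq_mul, mul_one]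
  exact ENNReal.inv_mul_cancel (by exact_mod_cast hm.ne') (ENNReal.natCast_ne_top m)

theorem stmt18 (B : ℕ → ℕ → Prop) (τ : Shift B → ℝ) (hτ : ClassR B τ)
    (i q : ℕ) (hq : 0 < q) (hW : (loopWords B i q).Infinite) :
    ∃ p : ℕ → Shift B, Function.Injective p ∧
      (∀ k, (shiftMap B)^[q] (p k) = p k ∧
        List.ofFn (fun j : Fin (q + 1) => (p k).val j) ∈ loopWords B i q) ∧
      Tendsto (fun k => ∫ x, τ x ∂(periodicMeasure B (p k) q)) atTop atTop ∧
      ∀ c : ℝ, 0 < c → (∀ x, c ≤ τ x) →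
        ∀ w : List ℕ, w ≠ [] →
          Tendsto
            (fun k => suspMeasure B τ (periodicMeasure B (p k) q)
              (cyl B w ×ˢ Set.Icc 0 c)) atTop (𝓝 0) := by
  classical
  obtain ⟨huc, ⟨c0, hc0, hτc0⟩, hvar, hinf⟩ := hτ
  choose F hFmem j hj1 hj2 hjK using letters_big B i q hq hW
  set maxL : List ℕ → ℕ := fun l => l.foldr max 0 with hmaxL
  let W : ℕ → List ℕ := fun k => Nat.rec (F 0) (fun k prev => F (maxL prev + k + 2)) k
  have hW0 : W 0 = F 0 := rfl
  have hWs : ∀ k, W (k + 1) = F (maxL (W k) + k + 2) := fun k => rfl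
  have hWmem : ∀ k, W k ∈ loopWords B i q := by
    intro k
    cases k with
    | zero => exact hFmem 0
    | succ k => rw [hWs]; exact hFmem _
  have hWlen : ∀ k, (W k).length = q + 1 := fun k => (hWmem k).1
  have hWletter : ∀ k, ∃ jj, 0 < jj ∧ jj < q ∧ k ≤ (W k).getD jj 0 := by
    intro k
    cases k with
    | zero => exact ⟨j 0, hj1 0, hj2 0, Nat.zero_le _⟩
    | succ k =>
        refine ⟨j (maxL (W k) + k + 2), hj1 _, hj2 _, ?_⟩
        have := hjK (maxL (W k) + k + 2)
        rw [hWs]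
        omega
  have hWmax : ∀ k, maxL (W k) < maxL (W (k + 1)) := by
    intro k
    set K' := maxL (W k) + k + 2 with hK'
    have h1 := hjK K'
    have h2 : (F K').getD (j K') 0 ≤ maxL (W (k + 1)) := by
      rw [hWs]
      apply le_foldr_max
      rw [List.getD_eq_getElem _ 0 (show j K' < (F K').length by rw [(hFmem K').1]; have := hj2 K'; omega)]
      exact List.getElem_mem _
    omega
  have hWinj : Function.Injective W := by
    have hsm : StrictMono (fun k => maxL (W k)) := strictMono_nat_of_lt_succ hWmax
    intro a b h
    exact hsm.injective (congrArg maxL h)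
  have hpt := fun k => wordPoint_exists B i q hq (W k) (hWmem k)
  choose p hpval hpper hpofn using hpt
  have hIt : Tendsto (fun k => ∫ x, τ x ∂(periodicMeasure B (p k) q)) atTop atTop := by
    rw [tendsto_atTop]
    intro M
    obtain ⟨k₀, hk₀⟩ := hinf (q * max M 1)
    filter_upwards [eventually_ge_atTop k₀] with k hk
    rw [integral_periodicMeasure]
    obtain ⟨jj, hjj0, hjjq, hjjK⟩ := hWletter k
    have hsym : ((shiftMap B)^[jj] (p k)).val 0 = (W k).getD jj 0 := by
      rw [iter_shift, hpval, Nat.zero_add, Nat.mod_eq_of_lt hjjq]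
    have hτbig : q * max M 1 ≤ τ ((shiftMap B)^[jj] (p k)) := by
      apply hk₀
      rw [hsym]
      omega
    have hsum : (q : ℝ) * max M 1 ≤ ∑ jj ∈ Finset.range q, τ ((shiftMap B)^[jj] (p k)) :=
      le_trans hτbig (Finset.single_le_sum (f := fun j => τ ((shiftMap B)^[j] (p k)))
        (fun x _ => le_trans hc0.le (hτc0 _)) (Finset.mem_range.mpr hjjq))
    have hq0 : (q : ℝ) ≠ 0 := Nat.cast_ne_zero.2 hq.ne'
    have hmul := mul_le_mul_of_nonneg_left hsum (inv_nonneg.2 (Nat.cast_nonneg q))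
    rw [inv_mul_cancel_left₀ hq0] at hmul
    exact le_trans (le_max_left M 1) hmul
  refine ⟨p, ?_, ?_, hIt, ?_⟩
  · intro a b h
    apply hWinj
    rw [← hpofn a, ← hpofn b, h]
  · intro k
    refine ⟨hpper k, ?_⟩
    rw [hpofn k]
    exact hWmem k
  · intro c hc hτge w hwne
    have hb : ∀ k, suspMeasure B τ (periodicMeasure B (p k) q) (cyl B w ×ˢ Set.Icc 0 c) ≤
        (ENNReal.ofReal (∫ x, τ x ∂(periodicMeasure B (p k) q)))⁻¹ * ENNReal.ofReal c := by
      intro k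
      simp only [suspMeasure, Measure.smul_apply, smul_eq_mul]
      refine mul_le_mul_right ?_ _
      calc ((periodicMeasure B (p k) q).prod volume).restrict
            {pp : Shift B × ℝ | 0 ≤ pp.2 ∧ pp.2 < τ pp.1} (cyl B w ×ˢ Set.Icc 0 c)
          ≤ ((periodicMeasure B (p k) q).prod volume) (cyl B w ×ˢ Set.Icc 0 c) :=
            Measure.restrict_le_self _
        _ ≤ ((periodicMeasure B (p k) q).prod volume) (Set.univ ×ˢ Set.Icc 0 c) :=
            measure_mono (Set.prod_mono (Set.subset_univ _) subset_rfl)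
        _ = ENNReal.ofReal c := by
            rw [Measure.prod_prod, periodicMeasure_univ B (p k) q hq, one_mul,
              Real.volume_Icc, sub_zero]
    have hlim : Tendsto (fun k => (ENNReal.ofReal (∫ x, τ x ∂(periodicMeasure B (p k) q)))⁻¹
        * ENNReal.ofReal c) atTop (𝓝 0) := by
      have h1 : Tendsto (fun k => ENNReal.ofReal (∫ x, τ x ∂(periodicMeasure B (p k) q)))
          atTop (𝓝 ⊤) := ENNReal.tendsto_ofReal_atTop.comp hIt
      have h2 : Tendsto (fun k => (ENNReal.ofReal (∫ x, τ x ∂(periodicMeasure B (p k) q)))⁻¹)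
          atTop (𝓝 0) := by
        simpa using h1.inv
      simpa using ENNReal.Tendsto.mul_const h2 (Or.inr ENNReal.ofReal_ne_top)
    exact tendsto_of_tendsto_of_tendsto_of_le_of_le tendsto_const_nhds hlim
      (fun k => zero_le) hb
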